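/- Let φ = ⋀_{i ∈ I} cᵢ be a CNF over variables x₁, …, xₙ in which each clause cᵢ is a disjunction of exactly three literals over {x₁, …, xₙ}. Introduce fresh, pairwise distinct variables x'₁, …, x'ₙ and q₁, …, qₙ. For each clause cᵢ, let c̃ᵢ be the positive clause over {x₁, …, xₙ, x'₁, …, x'ₙ} obtained from cᵢ by replacing each negative literal ¬xⱼ with the variable x'ⱼ. Define Γ := { c̃ᵢ : i ∈ I } ∪ { σ ↦ σ xᵢ ∨ σ x'ᵢ, σ ↦ σ xᵢ ∨ σ qᵢ, σ ↦ σ x'ᵢ ∨ σ qᵢ : 1 ≤ i ≤ n }, A := {x₁, …, xₙ, x'₁, …, x'ₙ}, and let the manifestation be the term t := σ ↦ ⋀_{i=1}^{n} σ qᵢ. Then φ is satisfiable if and only if (Γ, A, t) has an explanation. -/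

import Mathlib

/-- `σ` satisfies the knowledge base `Γ` (a set of formulas, each a Boolean function
on assignments). -/
def SatKB {V : Type*} (Γ : Set ((V → Bool) → Bool)) (σ : V → Bool) : Prop :=
  ∀ γ ∈ Γ, γ σ = true

/-- `σ` satisfies the set of literals given by positive part `P` and negative part `N`. -/
def SatLits {V : Type*} (σ : V → Bool) (P N : Set V) : Prop :=
  (∀ x ∈ P, σ x = true) ∧ (∀ x ∈ N, σ x = false)

/-- `(P, N)` is an explanation for the abduction instance `(Γ, A, φ)`. -/
def IsExplanation {V : Type*} (Γ : Set ((V → Bool) → Bool)) (A : Set V)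
    (φ : (V → Bool) → Bool) (P N : Set V) : Prop :=
  P ⊆ A ∧ N ⊆ A ∧ Disjoint P N ∧
    (∃ σ, SatKB Γ σ ∧ SatLits σ P N) ∧
    (∀ σ, SatKB Γ σ → SatLits σ P N → φ σ = true)

/-- Reduction from 3-SAT to symmetric abduction over disjunctions of variables with a
positive term manifestation. Variables: `Sum.inl i` is `xᵢ`, `Sum.inr (Sum.inl i)` is
`x'ᵢ` and `Sum.inr (Sum.inr i)` is `qᵢ`. A literal is a pair (variable, polarity); it is
replaced by the positive variable `xᵢ` if positive and by `x'ᵢ` if negative. -/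
theorem stmt_7 (n : ℕ) (I : Type*) [Fintype I] (c : I → Fin 3 → Fin n × Bool) :
    let L : Fin n × Bool → Fin n ⊕ Fin n ⊕ Fin n := fun p =>
      if p.2 then Sum.inl p.1 else Sum.inr (Sum.inl p.1)
    let Γ : Set ((Fin n ⊕ Fin n ⊕ Fin n → Bool) → Bool) :=
      Set.range (fun i : I => fun σ : Fin n ⊕ Fin n ⊕ Fin n → Bool =>
          σ (L (c i 0)) || σ (L (c i 1)) || σ (L (c i 2))) ∪
      Set.range (fun i : Fin n => fun σ : Fin n ⊕ Fin n ⊕ Fin n → Bool =>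
          σ (Sum.inl i) || σ (Sum.inr (Sum.inl i))) ∪
      Set.range (fun i : Fin n => fun σ : Fin n ⊕ Fin n ⊕ Fin n → Bool =>
          σ (Sum.inl i) || σ (Sum.inr (Sum.inr i))) ∪
      Set.range (fun i : Fin n => fun σ : Fin n ⊕ Fin n ⊕ Fin n → Bool =>
          σ (Sum.inr (Sum.inl i)) || σ (Sum.inr (Sum.inr i)))
    let A : Set (Fin n ⊕ Fin n ⊕ Fin n) :=
      {v | ∃ i : Fin n, v = Sum.inl i ∨ v = Sum.inr (Sum.inl i)}
    let t : (Fin n ⊕ Fin n ⊕ Fin n → Bool) → Bool := fun σ =>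
      decide (∀ i : Fin n, σ (Sum.inr (Sum.inr i)) = true)
    (∃ a : Fin n → Bool, ∀ i : I, ∃ j : Fin 3, a (c i j).1 = (c i j).2) ↔
      ∃ P N : Set (Fin n ⊕ Fin n ⊕ Fin n), IsExplanation Γ A t P N := by
  intro L Γ A t
  have memR1 : ∀ i : I, (fun σ : Fin n ⊕ Fin n ⊕ Fin n → Bool =>
      σ (L (c i 0)) || σ (L (c i 1)) || σ (L (c i 2))) ∈ Γ :=
    fun i => Or.inl (Or.inl (Or.inl ⟨i, rfl⟩))
  have memR2 : ∀ i : Fin n, (fun σ : Fin n ⊕ Fin n ⊕ Fin n → Bool =>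
      σ (Sum.inl i) || σ (Sum.inr (Sum.inl i))) ∈ Γ :=
    fun i => Or.inl (Or.inl (Or.inr ⟨i, rfl⟩))
  have memR3 : ∀ i : Fin n, (fun σ : Fin n ⊕ Fin n ⊕ Fin n → Bool =>
      σ (Sum.inl i) || σ (Sum.inr (Sum.inr i))) ∈ Γ :=
    fun i => Or.inl (Or.inr ⟨i, rfl⟩)
  have memR4 : ∀ i : Fin n, (fun σ : Fin n ⊕ Fin n ⊕ Fin n → Bool =>
      σ (Sum.inr (Sum.inl i)) || σ (Sum.inr (Sum.inr i))) ∈ Γ :=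
    fun i => Or.inr ⟨i, rfl⟩
  constructor
  · rintro ⟨a, ha⟩
    set τ : Fin n ⊕ Fin n ⊕ Fin n → Bool := fun v => match v with
      | Sum.inl i => a i
      | Sum.inr (Sum.inl i) => !(a i)
      | Sum.inr (Sum.inr _) => true with hτ
    have hτ1 : ∀ i, τ (Sum.inl i) = a i := fun i => rfl
    have hτ2 : ∀ i, τ (Sum.inr (Sum.inl i)) = !(a i) := fun i => rfl
    have hτ3 : ∀ i, τ (Sum.inr (Sum.inr i)) = true := fun i => rfl
    have key : ∀ p : Fin n × Bool, a p.1 = p.2 → τ (L p) = true := by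
      rintro ⟨x, b⟩ h
      cases b <;> simp [L, hτ1, hτ2, h]
    refine ⟨{v | (∃ i, a i = true ∧ v = Sum.inl i) ∨
                 (∃ i, a i = false ∧ v = Sum.inr (Sum.inl i))},
            {v | (∃ i, a i = false ∧ v = Sum.inl i) ∨
                 (∃ i, a i = true ∧ v = Sum.inr (Sum.inl i))}, ?_, ?_, ?_,
            ⟨τ, ?_, ?_, ?_⟩, ?_⟩
    · rintro v (⟨i, _, rfl⟩ | ⟨i, _, rfl⟩)
      exacts [⟨i, Or.inl rfl⟩, ⟨i, Or.inr rfl⟩]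
    · rintro v (⟨i, _, rfl⟩ | ⟨i, _, rfl⟩)
      exacts [⟨i, Or.inl rfl⟩, ⟨i, Or.inr rfl⟩]
    · rw [Set.disjoint_left]
      rintro v (⟨i, hi, rfl⟩ | ⟨i, hi, rfl⟩) (⟨j, hj, hv⟩ | ⟨j, hj, hv⟩) <;>
        simp_all
    · -- τ satisfies Γ
      rintro γ (((⟨i, rfl⟩ | ⟨i, rfl⟩) | ⟨i, rfl⟩) | ⟨i, rfl⟩)
      · obtain ⟨j, hj⟩ := ha i
        have hk := key _ hj
        show (τ (L (c i 0)) || τ (L (c i 1)) || τ (L (c i 2))) = true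
        simp only [Bool.or_eq_true]
        rcases j with ⟨jv, hjv⟩
        interval_cases jv
        exacts [Or.inl (Or.inl hk), Or.inl (Or.inr hk), Or.inr hk]
      · show (τ (Sum.inl i) || τ (Sum.inr (Sum.inl i))) = true
        simp [hτ1, hτ2]
      · show (τ (Sum.inl i) || τ (Sum.inr (Sum.inr i))) = true
        simp [hτ3]
      · show (τ (Sum.inr (Sum.inl i)) || τ (Sum.inr (Sum.inr i))) = true
        simp [hτ3]
    · rintro v (⟨i, hi, rfl⟩ | ⟨i, hi, rfl⟩) <;> simp [hτ1, hτ2, hi]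
    · rintro v (⟨i, hi, rfl⟩ | ⟨i, hi, rfl⟩) <;> simp [hτ1, hτ2, hi]
    · intro σ hKB hE
      simp only [t, decide_eq_true_eq]
      intro i
      cases hai : a i
      · have hx : σ (Sum.inl i) = false :=
          hE.2 _ (Or.inl ⟨i, hai, rfl⟩)
        have h3 := hKB _ (memR3 i)
        try simp only at h3
        rw [hx, Bool.false_or] at h3
        exact h3
      · have hx : σ (Sum.inr (Sum.inl i)) = false :=
          hE.2 _ (Or.inr ⟨i, hai, rfl⟩)
        have h4 := hKB _ (memR4 i)
        try simp only at h4
        rw [hx, Bool.false_or] at h4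
        exact h4
  · rintro ⟨P, N, hPA, hNA, hdisj, ⟨σ, hσΓ, hσE⟩, hent⟩
    set σ' : Fin n ⊕ Fin n ⊕ Fin n → Bool := fun v => match v with
      | Sum.inl i => σ (Sum.inl i)
      | Sum.inr (Sum.inl i) => σ (Sum.inr (Sum.inl i))
      | Sum.inr (Sum.inr i) => !(σ (Sum.inl i) && σ (Sum.inr (Sum.inl i))) with hσ'
    have h1 : ∀ i, σ' (Sum.inl i) = σ (Sum.inl i) := fun i => rfl
    have h2 : ∀ i, σ' (Sum.inr (Sum.inl i)) = σ (Sum.inr (Sum.inl i)) := fun i => rfl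
    have h3 : ∀ i, σ' (Sum.inr (Sum.inr i)) =
        !(σ (Sum.inl i) && σ (Sum.inr (Sum.inl i))) := fun i => rfl
    have hL : ∀ p : Fin n × Bool, σ' (L p) = σ (L p) := by
      rintro ⟨x, b⟩; cases b <;> simp [L, h1, h2]
    have hKB' : SatKB Γ σ' := by
      rintro γ (((⟨i, rfl⟩ | ⟨i, rfl⟩) | ⟨i, rfl⟩) | ⟨i, rfl⟩)
      · show (σ' (L (c i 0)) || σ' (L (c i 1)) || σ' (L (c i 2))) = true
        simp only [hL]; exact hσΓ _ (memR1 i)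
      · show (σ' (Sum.inl i) || σ' (Sum.inr (Sum.inl i))) = true
        rw [h1, h2]; exact hσΓ _ (memR2 i)
      · show (σ' (Sum.inl i) || σ' (Sum.inr (Sum.inr i))) = true
        rw [h1, h3]
        cases h : σ (Sum.inl i) <;> simp [h]
      · show (σ' (Sum.inr (Sum.inl i)) || σ' (Sum.inr (Sum.inr i))) = true
        rw [h2, h3]
        cases h : σ (Sum.inr (Sum.inl i)) <;> simp [h]
    have hagree : ∀ v ∈ A, σ' v = σ v := by
      rintro v ⟨i, rfl | rfl⟩
      exacts [h1 i, h2 i]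
    have hE' : SatLits σ' P N := by
      constructor
      · intro v hv; rw [hagree v (hPA hv)]; exact hσE.1 v hv
      · intro v hv; rw [hagree v (hNA hv)]; exact hσE.2 v hv
    have ht := hent σ' hKB' hE'
    simp only [t, decide_eq_true_eq] at ht
    have hnotboth : ∀ i : Fin n,
        ¬(σ (Sum.inl i) = true ∧ σ (Sum.inr (Sum.inl i)) = true) := by
      intro i ⟨ha1, ha2⟩
      have := ht i
      rw [h3 i, ha1, ha2] at this
      simp at this
    refine ⟨fun i => σ (Sum.inl i), fun i => ?_⟩
    have hcl := hσΓ _ (memR1 i)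
    simp only [Bool.or_eq_true] at hcl
    have hjs : ∃ j : Fin 3, σ (L (c i j)) = true := by
      rcases hcl with (h | h) | h
      exacts [⟨0, h⟩, ⟨1, h⟩, ⟨2, h⟩]
    obtain ⟨j, hj⟩ := hjs
    refine ⟨j, ?_⟩
    show σ (Sum.inl (c i j).1) = (c i j).2
    cases hb : (c i j).2
    · simp only [L, hb, if_neg Bool.false_ne_true] at hj
      have hn := hnotboth (c i j).1
      cases hx : σ (Sum.inl (c i j).1)
      · rfl
      · exact absurd ⟨hx, hj⟩ hn
    · simpa [L, hb] using hj
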